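/- Let G be a group containing a nontrivial proper finite subgroup H. Let A = xH be any right coset of H (x ∈ G) and let B = (H ∖ {e}) ∪ {g} for any element g ∈ G ∖ H. Then A and B are finite subsets of G with |A| = |B| and e ∉ B, but there is no matching from A to B. In particular, G does not have the matching property. -/

import Mathlib

/-- A matching from a finite subset `A` to a finite subset `B` of a group `G` is a
bijection `f : A → B` such that `a * f a ∉ A` for all `a ∈ A`. -/
def IsMatching {G : Type*} [Group G] (A B : Finset G) (f : ↥A ≃ ↥B) : Prop :=
  ∀ a : ↥A, (a : G) * (f a : G) ∉ A

/-- A group `G` has the matching property if for all finite subsets `A`, `B` of `G` with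
`|A| = |B|` and `1 ∉ B` there is a matching from `A` to `B`. -/
def HasMatchingProperty (G : Type*) [Group G] : Prop :=
  ∀ A B : Finset G, A.card = B.card → (1 : G) ∉ B → ∃ f : ↥A ≃ ↥B, IsMatching A B f

/-- Let `G` be a group containing a nontrivial proper finite subgroup `H`, let
`A = x * H` be a coset of `H` and `B = (H \ {1}) ∪ {g}` for some `g ∈ G \ H`. Then `A`
and `B` are finite subsets of `G` with `|A| = |B|` and `1 ∉ B`, but there is no matching
from `A` to `B`; in particular `G` does not have the matching property. -/
theorem stmt7 {G : Type*} [Group G] [DecidableEq G] (H : Subgroup G)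
    (hfin : (H : Set G).Finite) (hbot : H ≠ ⊥) (htop : H ≠ ⊤) (x g : G) (hg : g ∉ H)
    (A B : Finset G) (hA : A = hfin.toFinset.image (x * ·))
    (hB : B = insert g (hfin.toFinset.erase 1)) :
    A.card = B.card ∧ (1 : G) ∉ B ∧ (¬ ∃ f : ↥A ≃ ↥B, IsMatching A B f) ∧
      ¬ HasMatchingProperty G := by
  subst hA hB

  -- basic facts
  have h1H : (1 : G) ∈ hfin.toFinset := by simp [Set.Finite.mem_toFinset]
  have hgB : g ∉ hfin.toFinset.erase 1 := by
    intro hmem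
    exact hg (by simpa [Set.Finite.mem_toFinset] using Finset.mem_of_mem_erase hmem)
  have hcard : (Finset.image (fun y => x * y) hfin.toFinset).card = (insert g (hfin.toFinset.erase 1)).card := by
    rw [Finset.card_insert_of_notMem hgB, Finset.card_erase_of_mem h1H,
      Finset.card_image_of_injective _ (mul_right_injective x)]
    have : 0 < hfin.toFinset.card := Finset.card_pos.mpr ⟨1, h1H⟩
    omega
  have h1B : (1 : G) ∉ insert g (hfin.toFinset.erase 1) := by
    simp only [Finset.mem_insert, Finset.mem_erase]
    rintro (rfl | ⟨h, _⟩)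
    · exact hg H.one_mem
    · exact h rfl
  -- an element h ∈ H, h ≠ 1
  obtain ⟨h0, hh0H, hh0⟩ : ∃ h0, h0 ∈ H ∧ h0 ≠ 1 := by
    by_contra hcon
    push_neg at hcon
    exact hbot (Subgroup.ext fun y => ⟨fun hy => hcon y hy, by rintro rfl; exact H.one_mem⟩)
  have hnomatch : ¬ ∃ f : ↥(Finset.image (fun y => x * y) hfin.toFinset) ≃ ↥(insert g (hfin.toFinset.erase 1)), IsMatching _ _ f := by
    rintro ⟨f, hf⟩
    have hb : h0 ∈ insert g (hfin.toFinset.erase 1) := by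
      simp [Finset.mem_insert, Finset.mem_erase, hh0, Set.Finite.mem_toFinset, hh0H]
    set a := f.symm ⟨h0, hb⟩ with ha
    have hfa : (f a : G) = h0 := by rw [ha, Equiv.apply_symm_apply]
    obtain ⟨h1, hh1, hxh⟩ := Finset.mem_image.mp a.2
    rw [Set.Finite.mem_toFinset] at hh1
    refine hf a ?_
    rw [Finset.mem_image, hfa]
    exact ⟨h1 * h0, by rw [Set.Finite.mem_toFinset]; exact H.mul_mem hh1 hh0H,
      by simp [← hxh, mul_assoc]⟩
  refine ⟨hcard, h1B, hnomatch, fun hmp => hnomatch (hmp _ _ hcard h1B)⟩
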